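/- Let x be an interior point of the unit cube [0,1]^d, let r ∈ ℝ^d be a unit vector with all coordinates nonpositive, and let S be a set of vertices of the cube such that x is a proper convex combination of the elements of S. Then max_{v ∈ S} ⟨r, 0 − v⟩ ≥ ‖r‖_∞ ≥ 1/√d. -/
import Mathlib


open scoped InnerProductSpace

private lemma sum_smul_apply_aux {d : ℕ} (S : Finset (EuclideanSpace ℝ (Fin d)))
    (α : EuclideanSpace ℝ (Fin d) → ℝ) (i₀ : Fin d) :
    (∑ v ∈ S, α v • v) i₀ = ∑ v ∈ S, α v * v i₀ := by
  induction S using Finset.cons_induction with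
  | empty => simp
  | cons a s ha ih => simp [Finset.sum_cons, ih]

/-- For an interior point `x` of the unit cube, a unit vector `r` with nonpositive
coordinates (so `s = 0` is a maximizing vertex), and an active vertex set `S` for `x`:
`max_{v ∈ S} ⟨r, 0 - v⟩ ≥ ‖r‖_∞ ≥ 1/√d`, expressed as: some `v ∈ S` satisfies
`⟨r, 0 - v⟩ ≥ |r_i|` for all `i`, and some coordinate satisfies `|r_i| ≥ 1/√d`. -/
theorem stmt7 (d : ℕ) (hd : 0 < d) (x r : EuclideanSpace ℝ (Fin d))
    (hx : ∀ i, 0 < x i ∧ x i < 1) (hr : ‖r‖ = 1) (hrneg : ∀ i, r i ≤ 0)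
    (S : Finset (EuclideanSpace ℝ (Fin d))) (hSv : ∀ v ∈ S, ∀ i, v i = 0 ∨ v i = 1)
    (α : EuclideanSpace ℝ (Fin d) → ℝ) (hαpos : ∀ v ∈ S, 0 < α v)
    (hαsum : (∑ v ∈ S, α v) = 1) (hxcomb : x = ∑ v ∈ S, α v • v) :
    (∃ v ∈ S, ∀ i, |r i| ≤ ⟪r, (0 : EuclideanSpace ℝ (Fin d)) - v⟫_ℝ) ∧
      ∃ i : Fin d, 1 / Real.sqrt d ≤ |r i| := by
  have hfin : Nonempty (Fin d) := ⟨⟨0, hd⟩⟩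
  -- pick i₀ maximizing |r i|
  obtain ⟨i₀, -, hi₀⟩ := Finset.exists_max_image Finset.univ (fun i => |r i|)
    ⟨⟨0, hd⟩, Finset.mem_univ _⟩
  have hi₀max : ∀ i, |r i| ≤ |r i₀| := fun i => hi₀ i (Finset.mem_univ i)
  -- norm squared
  have hsum : (∑ i, (r i) ^ 2) = 1 := by
    have := EuclideanSpace.norm_eq r
    rw [hr] at this
    have h1 : Real.sqrt (∑ i, ‖r i‖ ^ 2) = 1 := this.symm
    have h2 : (∑ i, ‖r i‖ ^ 2) = 1 := by
      have hnn : (0:ℝ) ≤ ∑ i, ‖r i‖ ^ 2 :=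
        Finset.sum_nonneg fun i _ => sq_nonneg _
      nlinarith [Real.sq_sqrt hnn]
    simpa [Real.norm_eq_abs, sq_abs] using h2
  -- second part
  have hsecond : 1 / Real.sqrt d ≤ |r i₀| := by
    have hle : (1:ℝ) ≤ d * |r i₀| ^ 2 := by
      have : (∑ i, (r i) ^ 2) ≤ ∑ _i : Fin d, |r i₀| ^ 2 := by
        apply Finset.sum_le_sum
        intro i _
        have h := pow_le_pow_left₀ (abs_nonneg (r i)) (hi₀max i) 2
        simpa [sq_abs] using h
      rw [hsum] at this
      simpa [Finset.sum_const, Finset.card_univ, nsmul_eq_mul] using this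
    have hdpos : (0:ℝ) < d := by exact_mod_cast hd
    have hinv : (1:ℝ) / d ≤ |r i₀| ^ 2 := by
      rw [div_le_iff₀ hdpos]; nlinarith
    calc 1 / Real.sqrt d = Real.sqrt (1 / d) := by
          rw [one_div, one_div, Real.sqrt_inv]
      _ ≤ Real.sqrt (|r i₀| ^ 2) := Real.sqrt_le_sqrt hinv
      _ = |r i₀| := by rw [Real.sqrt_sq (abs_nonneg _)]
  refine ⟨?_, ⟨i₀, hsecond⟩⟩
  -- find v ∈ S with v i₀ = 1
  have hxc : x i₀ = ∑ v ∈ S, α v * v i₀ := by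
    rw [hxcomb]
    exact sum_smul_apply_aux S α i₀
  have hex : ∃ v ∈ S, v i₀ = 1 := by
    by_contra h
    push_neg at h
    have hz : ∀ v ∈ S, v i₀ = 0 := by
      intro v hv
      rcases hSv v hv i₀ with h0 | h1
      · exact h0
      · exact absurd h1 (h v hv)
    have : x i₀ = 0 := by
      rw [hxc]
      exact Finset.sum_eq_zero fun v hv => by rw [hz v hv, mul_zero]
    exact absurd this (ne_of_gt (hx i₀).1)
  obtain ⟨v, hvS, hv1⟩ := hex
  refine ⟨v, hvS, fun i => ?_⟩
  have hinner : ⟪r, (0 : EuclideanSpace ℝ (Fin d)) - v⟫_ℝ = ∑ j, r j * (-(v j)) := by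
    simp [PiLp.inner_apply, RCLike.inner_apply, PiLp.sub_apply, mul_comm]
  rw [hinner]
  have habs : |r i| ≤ -(r i₀) := by
    have := hi₀max i
    rw [abs_of_nonpos (hrneg i₀)] at this
    exact this
  have hterm : -(r i₀) = r i₀ * (-(v i₀)) := by rw [hv1]; ring
  have hle2 : r i₀ * (-(v i₀)) ≤ ∑ j, r j * (-(v j)) := by
    apply Finset.single_le_sum (f := fun j => r j * (-(v j))) _ (Finset.mem_univ i₀)
    intro j _
    show 0 ≤ r j * -(v j)
    rcases hSv v hvS j with h0 | h1
    · rw [h0]; simp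
    · rw [h1]; nlinarith [hrneg j]
  linarith
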